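/- Let s₀ be real and let Z be a set of complex numbers, closed under conjugation, with no accumulation point, none equal to any point of (s₀ − ε, s₀ + ε) ⊂ ℝ, and such that every horizontal strip {z : a ≤ Im z ≤ b} contains only finitely many elements of Z. Then there exists s' ∈ (s₀ − ε, s₀ + ε) and ρ₀ ∈ Z with Im ρ₀ ≥ 0 such that |s' − ρ₀| < |s' − ρ| for every ρ ∈ Z with ρ ∉ {ρ₀, ρ̄₀}. -/

import Mathlib

open Complex Set Filter

/-- The set of reals equidistant from two non-equal, non-conjugate points is a subsingleton. -/
lemma bad_subsingleton (ρ₁ ρ₂ : ℂ) (h1 : ρ₁ ≠ ρ₂) (h2 : ρ₁ ≠ (starRingEnd ℂ) ρ₂) :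
    {s : ℝ | ‖(s : ℂ) - ρ₁‖ = ‖(s : ℂ) - ρ₂‖}.Subsingleton := by
  intro s hs t ht
  simp only [mem_setOf_eq] at hs ht
  by_contra hst
  have hs' : Complex.normSq ((s : ℂ) - ρ₁) = Complex.normSq ((s : ℂ) - ρ₂) := by
    have := congrArg (· ^ 2) hs
    simpa [Complex.sq_norm] using this
  have ht' : Complex.normSq ((t : ℂ) - ρ₁) = Complex.normSq ((t : ℂ) - ρ₂) := by
    have := congrArg (· ^ 2) ht
    simpa [Complex.sq_norm] using this
  simp only [Complex.normSq_apply, Complex.sub_re, Complex.sub_im, Complex.ofReal_re,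
    Complex.ofReal_im, zero_sub] at hs' ht'
  have key : (t - s) * (ρ₁.re - ρ₂.re) = 0 := by linear_combination (1/2 : ℝ) * hs' - (1/2 : ℝ) * ht'
  have hre : ρ₁.re = ρ₂.re := by
    rcases mul_eq_zero.mp key with h | h
    · exact absurd (sub_eq_zero.mp h).symm hst
    · exact sub_eq_zero.mp h
  rw [hre] at hs'
  have him : ρ₁.im * ρ₁.im = ρ₂.im * ρ₂.im := by nlinarith
  have : ρ₁.im = ρ₂.im ∨ ρ₁.im = -ρ₂.im := mul_self_eq_mul_self_iff.mp him
  rcases this with h | h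
  · exact h1 (Complex.ext hre h)
  · exact h2 (Complex.ext (by simpa using hre) (by simpa using h))

lemma countable_of_strips (Z : Set ℂ)
    (hstrip : ∀ a b : ℝ, {z ∈ Z | a ≤ z.im ∧ z.im ≤ b}.Finite) : Z.Countable := by
  have : Z ⊆ ⋃ n : ℤ, {z ∈ Z | (n : ℝ) ≤ z.im ∧ z.im ≤ n + 1} := by
    intro z hz
    exact mem_iUnion.mpr ⟨⌊z.im⌋, hz, Int.floor_le _, by
      have := Int.lt_floor_add_one z.im; push_cast; linarith⟩
  exact Set.Countable.mono this (Set.countable_iUnion fun n => (hstrip n (n+1)).countable)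

theorem exists_unique_closest_zero (s₀ ε : ℝ) (hε : 0 < ε) (Z : Set ℂ)
    (hne : Z.Nonempty)
    (hconj : ∀ z ∈ Z, (starRingEnd ℂ) z ∈ Z)
    (hacc : ∀ w : ℂ, ¬ AccPt w (Filter.principal Z))
    (hstrip : ∀ a b : ℝ, {z ∈ Z | a ≤ z.im ∧ z.im ≤ b}.Finite)
    (hdisj : ∀ x ∈ Ioo (s₀ - ε) (s₀ + ε), (x : ℂ) ∉ Z) :
    ∃ s' ∈ Ioo (s₀ - ε) (s₀ + ε), ∃ ρ₀ ∈ Z, 0 ≤ ρ₀.im ∧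
      ∀ ρ ∈ Z, ρ ≠ ρ₀ → ρ ≠ (starRingEnd ℂ) ρ₀ →
        ‖(s' : ℂ) - ρ₀‖ < ‖(s' : ℂ) - ρ‖ := by
  classical
  set B : Set ℝ := ⋃ ρ₁ ∈ Z, ⋃ ρ₂ ∈ Z,
    {s : ℝ | (ρ₁ ≠ ρ₂ ∧ ρ₁ ≠ (starRingEnd ℂ) ρ₂) ∧
      ‖(s : ℂ) - ρ₁‖ = ‖(s : ℂ) - ρ₂‖} with hB
  have hZc : Z.Countable := countable_of_strips Z hstrip
  have hBc : B.Countable := by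
    refine hZc.biUnion fun ρ₁ h₁ => hZc.biUnion fun ρ₂ h₂ => ?_
    by_cases h : ρ₁ ≠ ρ₂ ∧ ρ₁ ≠ (starRingEnd ℂ) ρ₂
    · refine Set.Finite.countable (Set.Subsingleton.finite ?_)
      exact fun s hs t ht => bad_subsingleton ρ₁ ρ₂ h.1 h.2 hs.2 ht.2
    · have : {s : ℝ | (ρ₁ ≠ ρ₂ ∧ ρ₁ ≠ (starRingEnd ℂ) ρ₂) ∧
          ‖(s : ℂ) - ρ₁‖ = ‖(s : ℂ) - ρ₂‖} = ∅ := by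
        ext s; simp only [mem_setOf_eq, mem_empty_iff_false, iff_false]
        exact fun hc => h hc.1
      simp [this]
  -- find s' in Ioo \ B
  have hioo : (Ioo (s₀ - ε) (s₀ + ε) \ B).Nonempty := by
    by_contra h
    rw [not_nonempty_iff_eq_empty, diff_eq_empty] at h
    have h1 : MeasureTheory.volume (Ioo (s₀ - ε) (s₀ + ε)) = 0 :=
      le_antisymm (le_trans (MeasureTheory.measure_mono h) (le_of_eq (hBc.measure_zero _))) zero_le
    rw [Real.volume_Ioo] at h1
    have : (0 : ℝ) < (s₀ + ε) - (s₀ - ε) := by linarith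
    simp [ENNReal.ofReal_eq_zero, not_lt.mpr this.le] at h1
    linarith
  obtain ⟨s', hs'I, hs'B⟩ := hioo
  refine ⟨s', hs'I, ?_⟩
  -- finite nonempty set of candidates
  obtain ⟨z₀, hz₀⟩ := hne
  set R : ℝ := ‖(s' : ℂ) - z₀‖ with hR
  set S : Set ℂ := {z ∈ Z | ‖(s' : ℂ) - z‖ ≤ R} with hS
  have hSfin : S.Finite := by
    refine (hstrip (-R) R).subset ?_
    rintro z ⟨hz, hle⟩
    refine ⟨hz, ?_, ?_⟩
    · have := Complex.abs_im_le_norm ((s' : ℂ) - z)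
      simp only [Complex.sub_im, Complex.ofReal_im, zero_sub, abs_neg] at this
      have := abs_le.mp (this.trans hle)
      linarith [this.1]
    · have := Complex.abs_im_le_norm ((s' : ℂ) - z)
      simp only [Complex.sub_im, Complex.ofReal_im, zero_sub, abs_neg] at this
      have := abs_le.mp (this.trans hle)
      linarith [this.2]
  have hSne : S.Nonempty := ⟨z₀, hz₀, le_refl _⟩
  obtain ⟨ρ, hρS, hρmin⟩ := Set.exists_min_image S (fun z => ‖(s' : ℂ) - z‖) hSfin hSne
  -- ρ minimizes over all of Z
  have hmin : ∀ z ∈ Z, ‖(s' : ℂ) - ρ‖ ≤ ‖(s' : ℂ) - z‖ := by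
    intro z hz
    by_cases h : ‖(s' : ℂ) - z‖ ≤ R
    · exact hρmin z ⟨hz, h⟩
    · exact le_trans (hρmin z₀ ⟨hz₀, le_refl _⟩) (le_of_not_ge h)
  -- conjugate has same distance
  have hconjdist : ∀ z : ℂ, ‖(s' : ℂ) - (starRingEnd ℂ) z‖
      = ‖(s' : ℂ) - z‖ := by
    intro z
    rw [show ((s' : ℂ) - (starRingEnd ℂ) z) = (starRingEnd ℂ) ((s' : ℂ) - z) by
      simp [map_sub, Complex.conj_ofReal]]
    exact Complex.norm_conj _
  set ρ₀ : ℂ := if 0 ≤ ρ.im then ρ else (starRingEnd ℂ) ρ with hρ₀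
  have hρ₀Z : ρ₀ ∈ Z := by
    rw [hρ₀]; split_ifs
    · exact hρS.1
    · exact hconj ρ hρS.1
  have hρ₀im : 0 ≤ ρ₀.im := by
    rw [hρ₀]; split_ifs with h
    · exact h
    · simpa using neg_nonneg.mpr (le_of_not_ge h)
  have hρ₀dist : ‖(s' : ℂ) - ρ₀‖ = ‖(s' : ℂ) - ρ‖ := by
    rw [hρ₀]; split_ifs
    · rfl
    · exact hconjdist ρ
  refine ⟨ρ₀, hρ₀Z, hρ₀im, ?_⟩
  intro z hz hne1 hne2
  have hle : ‖(s' : ℂ) - ρ₀‖ ≤ ‖(s' : ℂ) - z‖ := by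
    rw [hρ₀dist]; exact hmin z hz
  rcases lt_or_eq_of_le hle with h | h
  · exact h
  · exfalso
    apply hs'B
    rw [hB]
    refine mem_biUnion hρ₀Z (mem_biUnion hz ?_)
    refine ⟨⟨?_, ?_⟩, h⟩
    · exact fun hc => hne1 hc.symm
    · intro hc
      apply hne2
      have := congrArg (starRingEnd ℂ) hc
      simpa using this.symm
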